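/- Suppose (E3) holds: for all (x,p,m), ξᵀ(−H_m D_pB)ξ ≥ (1 + 1/C₀)·¼((B_m − D_pH)·ξ)² for all ξ ∈ ℝ^d, where all derivatives of H, B are evaluated at (x,p,m). Set Y⁺ = B_m + D_pH, Y⁻ = B_m − D_pH and define A(x,p,m) = (½Y⁺, −1)ᵀ(½Y⁺, −1) − blockdiag( ¼Y⁻(Y⁻)ᵀ + H_m D_pB , 0 ). Then there exists C > 0 depending only on C₀ such that for every (x,p,m) ∈ 𝕋^d × ℝ^d × (0,∞) and every s ∈ ℝ, writing q = (p,s) ∈ ℝ^{d+1}: (i) qᵀA(x,p,m)q ≥ ( −s + ½Y⁺·p )² + (1/C)( ½Y⁻·p )² + (1/C)(−H_m) pᵀD_pB p, and (ii) ( −s + D_pH·p )² ≤ C · qᵀA(x,p,m)q. -/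

import Mathlib

open Set Function MeasureTheory Filter
open scoped Topology

noncomputable section

/-- `Ed d` is the ambient Euclidean space `ℝ^d`; the flat torus `𝕋^d` is modeled by
`ℤ^d`-periodic functions on `Ed d`. -/
abbrev Ed (d : ℕ) := EuclideanSpace ℝ (Fin d)

namespace EMFG

variable {d : ℕ}

/-- Euclidean scalar product. -/
def dotE {d : ℕ} (u v : Ed d) : ℝ := inner ℝ u v

/-- Periodicity with respect to the standard integer lattice: a function on `ℝ^d`
descends to the torus `𝕋^d`. -/
def XPeriodic {α : Type*} (f : Ed d → α) : Prop :=
  ∀ (x : Ed d) (i : Fin d), f (x + EuclideanSpace.single i (1:ℝ)) = f x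

/-! Partial derivatives of a scalar Hamiltonian `H = H(x,p,m)`. -/

/-- `H_m` -/
def dm (H : Ed d → Ed d → ℝ → ℝ) (x p : Ed d) (m : ℝ) : ℝ :=
  deriv (fun m' => H x p m') m

/-- `H_{mm}` -/
def dmm (H : Ed d → Ed d → ℝ → ℝ) (x p : Ed d) (m : ℝ) : ℝ :=
  deriv (fun m' => dm H x p m') m

/-- `D_p H` (as a vector). -/
def gradp (H : Ed d → Ed d → ℝ → ℝ) (x p : Ed d) (m : ℝ) : Ed d :=
  gradient (fun p' => H x p' m) p

/-- `D_x H` (as a vector). -/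
def gradx (H : Ed d → Ed d → ℝ → ℝ) (x p : Ed d) (m : ℝ) : Ed d :=
  gradient (fun x' => H x' p m) x

/-- `D²_{pp} H` -/
def hesspp (H : Ed d → Ed d → ℝ → ℝ) (x p : Ed d) (m : ℝ) : Ed d →L[ℝ] Ed d :=
  fderiv ℝ (fun p' => gradp H x p' m) p

/-- `D²_{xx} H` -/
def hessxx (H : Ed d → Ed d → ℝ → ℝ) (x p : Ed d) (m : ℝ) : Ed d →L[ℝ] Ed d :=
  fderiv ℝ (fun x' => gradx H x' p m) x

/-- `D²_{xp} H` -/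
def hessxp (H : Ed d → Ed d → ℝ → ℝ) (x p : Ed d) (m : ℝ) : Ed d →L[ℝ] Ed d :=
  fderiv ℝ (fun x' => gradp H x' p m) x

/-- `D_p H_m` -/
def gradpdm (H : Ed d → Ed d → ℝ → ℝ) (x p : Ed d) (m : ℝ) : Ed d :=
  gradient (fun p' => dm H x p' m) p

/-- `D_x H_m` -/
def gradxdm (H : Ed d → Ed d → ℝ → ℝ) (x p : Ed d) (m : ℝ) : Ed d :=
  gradient (fun x' => dm H x' p m) x

/-! Partial derivatives of a vector field `B = B(x,p,m) ∈ ℝ^d`. -/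

/-- `B_m` -/
def vdm (B : Ed d → Ed d → ℝ → Ed d) (x p : Ed d) (m : ℝ) : Ed d :=
  deriv (fun m' => B x p m') m

/-- `B_{mm}` -/
def vdmm (B : Ed d → Ed d → ℝ → Ed d) (x p : Ed d) (m : ℝ) : Ed d :=
  deriv (fun m' => vdm B x p m') m

/-- `D_p B` -/
def jacp (B : Ed d → Ed d → ℝ → Ed d) (x p : Ed d) (m : ℝ) : Ed d →L[ℝ] Ed d :=
  fderiv ℝ (fun p' => B x p' m) p

/-- `D_x B` -/
def jacx (B : Ed d → Ed d → ℝ → Ed d) (x p : Ed d) (m : ℝ) : Ed d →L[ℝ] Ed d :=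
  fderiv ℝ (fun x' => B x' p m) x

/-- `D_p B_m` -/
def jacpdm (B : Ed d → Ed d → ℝ → Ed d) (x p : Ed d) (m : ℝ) : Ed d →L[ℝ] Ed d :=
  fderiv ℝ (fun p' => vdm B x p' m) p

/-- `D_x B_m` -/
def jacxdm (B : Ed d → Ed d → ℝ → Ed d) (x p : Ed d) (m : ℝ) : Ed d →L[ℝ] Ed d :=
  fderiv ℝ (fun x' => vdm B x' p m) x

/-- `D²_{pp} B` -/
def hessppB (B : Ed d → Ed d → ℝ → Ed d) (x p : Ed d) (m : ℝ) :
    Ed d →L[ℝ] Ed d →L[ℝ] Ed d :=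
  fderiv ℝ (fun p' => jacp B x p' m) p

/-- `D²_{xx} B` -/
def hessxxB (B : Ed d → Ed d → ℝ → Ed d) (x p : Ed d) (m : ℝ) :
    Ed d →L[ℝ] Ed d →L[ℝ] Ed d :=
  fderiv ℝ (fun x' => jacx B x' p m) x

/-- `D²_{xp} B` -/
def hessxpB (B : Ed d → Ed d → ℝ → Ed d) (x p : Ed d) (m : ℝ) :
    Ed d →L[ℝ] Ed d →L[ℝ] Ed d :=
  fderiv ℝ (fun x' => jacp B x' p m) x

/-- `div_x B` (at frozen `p`, `m`). -/
def divx (B : Ed d → Ed d → ℝ → Ed d) (x p : Ed d) (m : ℝ) : ℝ :=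
  ∑ i, (jacx B x p m (EuclideanSpace.single i (1:ℝ))) i

/-- The time derivative `u_t`, taken within the time interval `[0,T]`. -/
def tderiv (T : ℝ) (u : Ed d → ℝ → ℝ) (x : Ed d) (t : ℝ) : ℝ :=
  derivWithin (u x) (Icc 0 T) t

/-- The spatial gradient `D_x u`. -/
def sgrad (u : Ed d → ℝ → ℝ) (x : Ed d) (t : ℝ) : Ed d :=
  gradient (fun x' => u x' t) x

/-- The closed cylinder `Q̄_T = 𝕋^d × [0,T]` (lifted to `ℝ^d × [0,T]`). -/
def QTbar (d : ℕ) (T : ℝ) : Set (Ed d × ℝ) := univ ×ˢ Icc 0 T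

/-- `u ∈ C^n(Q̄_T)`. -/
def RegOn (n : ℕ) (T : ℝ) (u : Ed d → ℝ → ℝ) : Prop :=
  ContDiffOn ℝ n (fun z : Ed d × ℝ => u z.1 z.2) (QTbar d T)

/-- `u ∈ C^{k,s}(Q̄_T)`: `k` times continuously differentiable with `s`-Hölder
continuous `k`-th order derivatives. -/
def HolderRegOn (k : ℕ) (s T : ℝ) (u : Ed d → ℝ → ℝ) : Prop :=
  RegOn k T u ∧ ∃ C : NNReal,
    HolderOnWith C s.toNNReal
      (iteratedFDerivWithin ℝ k (fun z : Ed d × ℝ => u z.1 z.2) (QTbar d T)) (QTbar d T)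

/-- The full data and standing assumptions (M), (H), (B), (G), (E) of the paper,
together with the normalizations of Remark 2.1. -/
structure Setup (d : ℕ) where
  /-- the time horizon -/
  T : ℝ
  T_pos : 0 < T
  /-- the structural constant `C₀` -/
  C₀ : ℝ
  C₀_pos : 0 < C₀
  /-- growth exponents -/
  γ : ℝ
  γ₁ : ℝ
  γ₂ : ℝ
  hγ : 1 < γ
  hγ₁ : 0 ≤ γ₁
  hγ₂₁ : γ₂ ≤ γ₁
  hγ₁γ : γ₁ ≤ γ
  hγ₂ : γ₂ < 2 * γ₁ - γ + 2
  /-- the structural functions `C̄` and `ψ` on `(0,∞)` -/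
  Cb : ℝ → ℝ
  ψ : ℝ → ℝ
  Cb_pos : ∀ m : ℝ, 0 < m → 0 < Cb m
  ψ_pos : ∀ m : ℝ, 0 < m → 0 < ψ m
  Cb_cont : ContinuousOn Cb (Ioi 0)
  ψ_cont : ContinuousOn ψ (Ioi 0)
  ψ_mono : ∀ m₁ m₂ : ℝ, 0 < m₁ → m₁ ≤ m₂ → ψ m₂ ≤ ψ m₁
  ψ_lim : γ₁ < γ → ∃ ℓ : ℝ, 0 < ℓ ∧ Tendsto ψ atTop (𝓝 ℓ)
  /-- the initial density -/
  m₀ : Ed d → ℝ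
  m₀_per : XPeriodic m₀
  m₀_smooth : ContDiff ℝ 4 m₀
  m₀_pos : ∀ x, 0 < m₀ x
  m₀_int : ∫ x in {x : Ed d | ∀ i, x i ∈ Icc (0:ℝ) 1}, m₀ x = 1
  /-- the Hamiltonian -/
  H : Ed d → Ed d → ℝ → ℝ
  H_per : ∀ (p : Ed d) (m : ℝ), XPeriodic (fun x => H x p m)
  H_smooth : ContDiffOn ℝ 4 (fun z : Ed d × Ed d × ℝ => H z.1 z.2.1 z.2.2)
      (univ ×ˢ univ ×ˢ Ioi 0)
  Hm_neg : ∀ (x p : Ed d) (m : ℝ), 0 < m → dm H x p m < 0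
  H1 : ∀ (x p : Ed d) (m : ℝ), 0 < m → ∀ ξ : Ed d,
      C₀⁻¹ * ψ m * (1 + ‖p‖) ^ (γ - 2) * ‖ξ‖ ^ 2 ≤ dotE (hesspp H x p m ξ) ξ ∧
      dotE (hesspp H x p m ξ) ξ ≤ C₀ * ψ m * (1 + ‖p‖) ^ (γ - 2) * ‖ξ‖ ^ 2
  H2a : ∀ (x p : Ed d) (m : ℝ), 0 < m →
      ‖gradp H x p m‖ ≤ C₀ * ψ m * (1 + ‖p‖) ^ (γ - 1)
  H2b : ∀ (x p : Ed d) (m : ℝ), 0 < m →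
      (1 + C₀⁻¹) * H x p m - Cb m ≤ dotE (gradp H x p m) p
  HM1 : ∀ (x p : Ed d) (m : ℝ), 0 < m →
      C₀⁻¹ * ψ m * ‖p‖ ^ γ₁ ≤ -(m * dm H x p m) ∧
      -(m * dm H x p m) ≤ C₀ * ψ m * ‖p‖ ^ γ₁ + Cb m
  HM2 : ∀ (x p : Ed d) (m : ℝ), 0 < m →
      |m * dmm H x p m| ≤ -(C₀ * dm H x p m) ∧
      ‖p‖ * ‖gradpdm H x p m‖ ≤ -(C₀ * dm H x p m)
  HX1 : ∀ (x p : Ed d) (m : ℝ), 0 < m →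
      ‖gradx H x p m‖ ≤ C₀ * ψ m * (1 + ‖p‖) ^ γ₂ ∧
      ‖hessxx H x p m‖ ≤ C₀ * ψ m * (1 + ‖p‖) ^ γ₂ ∧
      ‖hessxp H x p m‖ ≤ C₀ * ψ m * (1 + ‖p‖) ^ (γ₂ - 1)
  HX2 : ∀ (x p : Ed d) (m : ℝ), 0 < m →
      m * ‖gradxdm H x p m‖ ≤ C₀ * ψ m * (1 + ‖p‖) ^ γ₂
  HX3 : ∀ (x : Ed d) (m : ℝ), 0 < m → ‖gradx H x 0 m‖ ≤ C₀
  /-- the drift vector field -/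
  B : Ed d → Ed d → ℝ → Ed d
  B_per : ∀ (p : Ed d) (m : ℝ), XPeriodic (fun x => B x p m)
  B_smooth : ContDiffOn ℝ 4 (fun z : Ed d × Ed d × ℝ => B z.1 z.2.1 z.2.2)
      (univ ×ˢ univ ×ˢ Ici 0)
  B_zero : ∀ x p : Ed d, B x p 0 = 0
  B1 : ∀ (x p : Ed d) (m : ℝ), 0 < m → ∀ ξ : Ed d,
      C₀⁻¹ * m * ψ m * ‖p‖ ^ (γ - 2) * ‖ξ‖ ^ 2 ≤ dotE (jacp B x p m ξ) ξ ∧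
      dotE (jacp B x p m ξ) ξ ≤ C₀ * m * ψ m * (1 + ‖p‖) ^ (γ - 2) * ‖ξ‖ ^ 2
  B2 : ∀ (x p : Ed d) (m : ℝ), 0 < m →
      ‖vdm B x p m‖ ≤ C₀ * ψ m * (1 + ‖p‖) ^ (γ - 1) ∧
      ‖jacpdm B x p m‖ ≤ C₀ * ψ m * (1 + ‖p‖) ^ (γ - 2) ∧
      ‖hessppB B x p m‖ ≤ C₀ * m * ψ m * (1 + ‖p‖) ^ (γ - 3)
  BM : ∀ (x p : Ed d) (m : ℝ), 0 < m →
      ‖vdmm B x p m‖ ≤ -(C₀ * (1 + ‖p‖) * dm H x p m)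
  BX1 : ∀ (x p : Ed d) (m : ℝ), 0 < m →
      ‖jacx B x p m‖ ≤ C₀ * m * ψ m * (1 + ‖p‖) ^ (γ₂ - 1) ∧
      ‖hessxxB B x p m‖ ≤ C₀ * m * ψ m * (1 + ‖p‖) ^ (γ₂ - 1) ∧
      ‖jacxdm B x p m‖ ≤ C₀ * ψ m * (1 + ‖p‖) ^ (γ₂ - 1)
  BX2 : ∀ (x p : Ed d) (m : ℝ), 0 < m →
      ‖hessxpB B x p m‖ ≤ C₀ * m * ψ m * (1 + ‖p‖) ^ (γ₂ - 2)
  BX3 : ∀ (x : Ed d) (m : ℝ), 0 < m → ‖jacx B x 0 m‖ ≤ C₀ * m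
  /-- the terminal coupling -/
  g : Ed d → ℝ → ℝ
  g_per : ∀ m : ℝ, XPeriodic (fun x => g x m)
  g_smooth : ContDiffOn ℝ 4 (fun z : Ed d × ℝ => g z.1 z.2) (univ ×ˢ Ioi 0)
  gm_pos : ∀ (x : Ed d) (m : ℝ), 0 < m → 0 < deriv (g x) m
  /-- `sup g` and `inf g`: the common limits of `g(x,·)` at `∞` and `0⁺` (assumption (G)) -/
  gSup : ℝ
  gInf : ℝ
  g_lim_top : ∀ x : Ed d, Tendsto (g x) atTop (𝓝 gSup)
  g_lim_bot : ∀ x : Ed d, Tendsto (g x) (𝓝[>] 0) (𝓝 gInf)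
  /-- (E1) -/
  E1 : ∀ M : ℝ, ∃ δ : ℝ, 0 < δ ∧ ∀ (x p : Ed d) (m : ℝ), 0 < m → m < δ → M ≤ H x p m
  /-- (E2) -/
  E2 : ∀ M : ℝ, ∃ R : ℝ, ∀ (x p : Ed d) (m : ℝ), 0 < m → R ≤ m →
      H x p m - C₀ * ψ m * ‖p‖ ^ γ ≤ -M
  /-- (E3), strict form of the uniqueness condition -/
  E3 : ∀ (x p : Ed d) (m : ℝ), 0 < m → ∀ ξ : Ed d, ξ ≠ 0 →
      (1 + C₀⁻¹) * (dotE (vdm B x p m - gradp H x p m) ξ) ^ 2 <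
        -(4 * dm H x p m) * dotE (jacp B x p m ξ) ξ
  /-- normalization (2.4) -/
  Hgrowth : ∀ (x p : Ed d) (m : ℝ), 0 < m →
      C₀⁻¹ * ψ m * ‖p‖ ^ γ - Cb m ≤ H x p m ∧ H x p m ≤ C₀ * ψ m * ‖p‖ ^ γ + Cb m
  /-- normalization (2.5) -/
  Hnorm : ∀ (x : Ed d) (m : ℝ), m ∈ Icc (⨅ y, m₀ y) (⨆ y, m₀ y) → |H x 0 m| ≤ C₀
  Bnorm : ∀ (x : Ed d) (m : ℝ), m ∈ Icc (⨅ y, m₀ y) (⨆ y, m₀ y) → ‖B x 0 m‖ ≤ C₀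

/-- `(u,m)` is a classical solution of the (EMFG) system (regularity stated separately). -/
structure IsSol (S : Setup d) (u m : Ed d → ℝ → ℝ) : Prop where
  u_per : ∀ t : ℝ, XPeriodic (fun x => u x t)
  m_per : ∀ t : ℝ, XPeriodic (fun x => m x t)
  m_pos : ∀ (x : Ed d) (t : ℝ), t ∈ Icc 0 S.T → 0 < m x t
  hjb : ∀ (x : Ed d) (t : ℝ), t ∈ Ioo 0 S.T →
      -(tderiv S.T u x t) + S.H x (sgrad u x t) (m x t) = 0
  kfp : ∀ (x : Ed d) (t : ℝ), t ∈ Ioo 0 S.T →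
      tderiv S.T m x t -
        ∑ i, ((fderiv ℝ (fun x' => S.B x' (sgrad u x' t) (m x' t)) x)
          (EuclideanSpace.single i (1:ℝ))) i = 0
  init : ∀ x : Ed d, m x 0 = S.m₀ x
  term : ∀ x : Ed d, u x S.T = S.g x (m x S.T)

end EMFG

namespace EMFG

/-- For `a ∈ ℝ^d`, the vector `(a, −1) ∈ ℝ^{d+1}` (indexed by `Fin d ⊕ Fin 1`). -/
def extv {d : ℕ} (a : Ed d) : (Fin d ⊕ Fin 1) → ℝ :=
  Sum.elim (fun i => a i) (fun _ => -1)

/-- The `(d+1)×(d+1)` coefficient matrix (Q1) of the quasilinear equation: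
`A = (½(B_m+D_pH),−1)ᵀ(½(B_m+D_pH),−1) − blockdiag(¼(B_m−D_pH)(B_m−D_pH)ᵀ + H_m D_pB, 0)`. -/
def Amat {d : ℕ} (H : Ed d → Ed d → ℝ → ℝ) (B : Ed d → Ed d → ℝ → Ed d)
    (x p : Ed d) (m : ℝ) : Matrix (Fin d ⊕ Fin 1) (Fin d ⊕ Fin 1) ℝ :=
  Matrix.vecMulVec (extv ((1/2 : ℝ) • (vdm B x p m + gradp H x p m)))
      (extv ((1/2 : ℝ) • (vdm B x p m + gradp H x p m))) -
    Matrix.fromBlocks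
      ((1/4 : ℝ) • Matrix.vecMulVec (fun i => (vdm B x p m - gradp H x p m) i)
          (fun i => (vdm B x p m - gradp H x p m) i) +
        Matrix.of (fun i j => dm H x p m *
          (jacp B x p m (EuclideanSpace.single j (1:ℝ))) i))
      0 0 0

/-- The first order coefficient (Q2), at a given density value `m`:
`b = −D_xH·B_m + H_m div_xB`. -/
def bcoef {d : ℕ} (H : Ed d → Ed d → ℝ → ℝ) (B : Ed d → Ed d → ℝ → Ed d)
    (x p : Ed d) (m : ℝ) : ℝ :=
  -(dotE (gradx H x p m) (vdm B x p m)) + dm H x p m * divx B x p m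

/-- The full `(d+1)×(d+1)` space-time Hessian `D²u` of `u` at `(x,t)` (time derivatives
taken within `[0,T]`). -/
def fullHess {d : ℕ} (T : ℝ) (u : Ed d → ℝ → ℝ) (x : Ed d) (t : ℝ) :
    (Fin d ⊕ Fin 1) → (Fin d ⊕ Fin 1) → ℝ := fun i j =>
  match i, j with
  | Sum.inl i, Sum.inl j =>
      ((fderiv ℝ (fun x' => sgrad u x' t) x) (EuclideanSpace.single j (1:ℝ))) i
  | Sum.inl i, Sum.inr _ => derivWithin (fun s => sgrad u x s i) (Icc 0 T) t
  | Sum.inr _, Sum.inl j =>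
      (fderiv ℝ (fun x' => tderiv T u x' t) x) (EuclideanSpace.single j (1:ℝ))
  | Sum.inr _, Sum.inr _ => derivWithin (fun s => tderiv T u x s) (Icc 0 T) t

end EMFG

namespace EMFG

open Matrix

/-- The space-time vector `q = (p,s) ∈ ℝ^{d+1}`. -/
def qvec {d : ℕ} (p : Ed d) (s : ℝ) : (Fin d ⊕ Fin 1) → ℝ :=
  Sum.elim (fun i => p i) (fun _ => s)


private lemma dotE_eq_sum {d : ℕ} (u v : Ed d) : dotE u v = ∑ i, u i * v i := by
  simp [dotE, PiLp.inner_apply, RCLike.inner_apply, conj_trivial, mul_comm]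

private lemma vmv_quad_aux {n : Type*} [Fintype n] (u v q w : n → ℝ) :
    q ⬝ᵥ (Matrix.vecMulVec u v).mulVec w = (q ⬝ᵥ u) * (v ⬝ᵥ w) := by
  have hmv : (Matrix.vecMulVec u v).mulVec w = fun i => u i * (v ⬝ᵥ w) := by
    funext i
    simp [Matrix.mulVec, Matrix.vecMulVec_apply, dotProduct, Finset.mul_sum, mul_assoc]
  rw [hmv]
  simp only [dotProduct, Finset.sum_mul]
  exact Finset.sum_congr rfl fun i _ => by ring

private lemma quad_eval_aux {d : ℕ} (Y G : Ed d) (J : Ed d →L[ℝ] Ed d) (h : ℝ)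
    (p : Ed d) (s : ℝ) :
    qvec p s ⬝ᵥ (Matrix.vecMulVec (extv ((1/2:ℝ) • (Y + G))) (extv ((1/2:ℝ) • (Y + G))) -
      Matrix.fromBlocks
        ((1/4:ℝ) • Matrix.vecMulVec (fun i => (Y - G) i) (fun i => (Y - G) i) +
          Matrix.of (fun i j => h * (J (EuclideanSpace.single j (1:ℝ))) i)) 0 0 0).mulVec
        (qvec p s)
    = (-s + dotE ((1/2:ℝ) • (Y + G)) p)^2 - (dotE ((1/2:ℝ) • (Y - G)) p)^2
      - h * dotE (J p) p := by
  have hJp : ∀ i, J p i = ∑ j, p j * J (EuclideanSpace.single j (1:ℝ)) i := by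
    intro i
    have hp : p = ∑ j, p j • EuclideanSpace.single j (1:ℝ) := by
      ext i; rw [WithLp.ofLp_sum, Finset.sum_apply]; simp [EuclideanSpace.single_apply]
    conv_lhs => rw [hp, map_sum]
    rw [WithLp.ofLp_sum, Finset.sum_apply]
    simp
  have hq : qvec p s = Sum.elim (fun i => p i) (fun _ : Fin 1 => s) := rfl
  rw [Matrix.sub_mulVec, dotProduct_sub, vmv_quad_aux]
  have h1 : extv ((1/2:ℝ) • (Y + G)) ⬝ᵥ qvec p s = dotE ((1/2:ℝ) • (Y + G)) p - s := by
    rw [hq]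
    show Sum.elim (fun i => ((1/2:ℝ) • (Y + G)) i) (fun _ : Fin 1 => -1) ⬝ᵥ _ = _
    rw [sumElim_dotProduct_sumElim, dotE_eq_sum]
    simp [dotProduct]
    ring
  have h1' : qvec p s ⬝ᵥ extv ((1/2:ℝ) • (Y + G)) = dotE ((1/2:ℝ) • (Y + G)) p - s := by
    rw [dotProduct_comm]; exact h1
  rw [h1, h1']
  have h2 : qvec p s ⬝ᵥ (Matrix.fromBlocks
        ((1/4:ℝ) • Matrix.vecMulVec (fun i => (Y - G) i) (fun i => (Y - G) i) +
          Matrix.of (fun i j => h * (J (EuclideanSpace.single j (1:ℝ))) i))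
        0 0 0).mulVec (qvec p s)
      = (dotE ((1/2:ℝ) • (Y - G)) p)^2 + h * dotE (J p) p := by
    rw [hq, Matrix.fromBlocks_mulVec, sumElim_dotProduct_sumElim]
    simp only [Matrix.mulVec_zero, add_zero, Matrix.zero_mulVec, zero_add,
      dotProduct_zero, Sum.elim_comp_inl]
    rw [Matrix.add_mulVec, dotProduct_add, Matrix.smul_mulVec, dotProduct_smul,
      vmv_quad_aux]
    have hw : (fun i => (Y - G) i) ⬝ᵥ (fun i => p i) = 2 * dotE ((1/2:ℝ) • (Y - G)) p := by
      rw [dotE_eq_sum]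
      simp only [dotProduct, Finset.mul_sum]
      exact Finset.sum_congr rfl fun i _ => by simp [PiLp.smul_apply]; ring
    have hw' : (fun i => p i) ⬝ᵥ (fun i => (Y - G) i) = 2 * dotE ((1/2:ℝ) • (Y - G)) p := by
      rw [dotProduct_comm]; exact hw
    rw [hw, hw']
    have hof : (fun i => p i) ⬝ᵥ (Matrix.of fun i j =>
        h * (J (EuclideanSpace.single j (1:ℝ))) i).mulVec (fun i => p i)
        = h * dotE (J p) p := by
      rw [dotE_eq_sum]
      simp only [dotProduct, Matrix.mulVec, Matrix.of_apply]
      rw [Finset.mul_sum]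
      refine Finset.sum_congr rfl fun i _ => ?_
      rw [hJp i, Finset.mul_sum, Finset.sum_mul, Finset.mul_sum]
      refine Finset.sum_congr rfl fun j _ => ?_
      ring
    rw [hof]
    simp only [smul_eq_mul]
    ring
  rw [h2]
  ring

private lemma alg1_aux (C₀ Z a D X : ℝ) (hC₀ : 0 < C₀)
    (hE3 : (1 + C₀⁻¹) * Z^2 ≤ -a * D) :
    X^2 + (2*(1+C₀))⁻¹ * Z^2 + (2*(1+C₀))⁻¹ * (-a) * D ≤ X^2 - Z^2 - a * D := by
  have hCpos : (0:ℝ) < 2*(1+C₀) := by linarith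
  have h1 : (2*(1+C₀))⁻¹ * (2*(1+C₀)) = 1 := inv_mul_cancel₀ (ne_of_gt hCpos)
  have h2 : C₀⁻¹ * C₀ = 1 := inv_mul_cancel₀ (ne_of_gt hC₀)
  have hg0 : 0 ≤ -a * D := le_trans (by positivity) hE3
  have hinv : (0:ℝ) < (2*(1+C₀))⁻¹ := by positivity
  have hinv2 : (0:ℝ) < C₀⁻¹ := by positivity
  nlinarith [mul_le_mul_of_nonneg_left hE3 (le_of_lt hC₀), sq_nonneg Z,
    mul_le_mul_of_nonneg_left hE3 (le_of_lt hinv), mul_pos hinv hinv2]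

private lemma alg2_aux (C₀ Z a D X : ℝ) (hC₀ : 0 < C₀)
    (hE3 : (1 + C₀⁻¹) * Z^2 ≤ -a * D) :
    (X - Z)^2 ≤ 2*(1+C₀) * (X^2 - Z^2 - a * D) := by
  have h2 : C₀⁻¹ * C₀ = 1 := inv_mul_cancel₀ (ne_of_gt hC₀)
  have hinv2 : (0:ℝ) < C₀⁻¹ := by positivity
  nlinarith [mul_le_mul_of_nonneg_left hE3 (le_of_lt hC₀), sq_nonneg (X - Z),
    sq_nonneg (X + Z), sq_nonneg Z, sq_nonneg X]

/-- estimates (3.13) and (3.15): under the strict ellipticity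
condition (E3) there is `C = C(C₀)` such that the quadratic form of `A` controls,
and is controlled by, the dominant signed quantities. -/
theorem quadratic_form_lower_bounds (C₀ : ℝ) (hC₀ : 0 < C₀) :
    ∃ C : ℝ, 0 < C ∧
    ∀ (d : ℕ) (H : Ed d → Ed d → ℝ → ℝ) (B : Ed d → Ed d → ℝ → Ed d),
      ContDiffOn ℝ 1 (fun z : Ed d × Ed d × ℝ => H z.1 z.2.1 z.2.2)
        (univ ×ˢ univ ×ˢ Ioi 0) →
      ContDiffOn ℝ 1 (fun z : Ed d × Ed d × ℝ => B z.1 z.2.1 z.2.2)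
        (univ ×ˢ univ ×ˢ Ioi 0) →
      (∀ (x p : Ed d) (m : ℝ), 0 < m → dm H x p m < 0) →
      (∀ (x p : Ed d) (m : ℝ), 0 < m → ∀ ξ : Ed d,
        (1 + C₀⁻¹) * ((1/4 : ℝ) * (dotE (vdm B x p m - gradp H x p m) ξ) ^ 2) ≤
          -(dm H x p m) * dotE (jacp B x p m ξ) ξ) →
      ∀ (x p : Ed d) (m : ℝ), 0 < m → ∀ s : ℝ,
        ((-s + dotE ((1/2 : ℝ) • (vdm B x p m + gradp H x p m)) p) ^ 2 +
          C⁻¹ * (dotE ((1/2 : ℝ) • (vdm B x p m - gradp H x p m)) p) ^ 2 +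
          C⁻¹ * (-(dm H x p m)) * dotE (jacp B x p m p) p ≤
            qvec p s ⬝ᵥ (Amat H B x p m).mulVec (qvec p s)) ∧
        ((-s + dotE (gradp H x p m) p) ^ 2 ≤
          C * (qvec p s ⬝ᵥ (Amat H B x p m).mulVec (qvec p s))) := by
  refine ⟨2*(1+C₀), by linarith, ?_⟩
  intro d H B _ _ hHm hE3 x p m hm s
  have hquad : qvec p s ⬝ᵥ (Amat H B x p m).mulVec (qvec p s) =
      (-s + dotE ((1/2:ℝ) • (vdm B x p m + gradp H x p m)) p)^2
      - (dotE ((1/2:ℝ) • (vdm B x p m - gradp H x p m)) p)^2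
      - dm H x p m * dotE (jacp B x p m p) p := by
    simp only [Amat]
    exact quad_eval_aux _ _ _ _ p s
  set X := -s + dotE ((1/2:ℝ) • (vdm B x p m + gradp H x p m)) p with hX
  set Z := dotE ((1/2:ℝ) • (vdm B x p m - gradp H x p m)) p with hZdef
  have hE3p : (1 + C₀⁻¹) * Z^2 ≤
      -(dm H x p m) * dotE (jacp B x p m p) p := by
    have h := hE3 x p m hm p
    have hZ2 : dotE (vdm B x p m - gradp H x p m) p = 2 * Z := by
      rw [hZdef, dotE, dotE, real_inner_smul_left]; ring
    rw [hZ2] at h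
    calc (1 + C₀⁻¹) * Z^2 = (1 + C₀⁻¹) * ((1/4:ℝ) * (2*Z)^2) := by ring
    _ ≤ -(dm H x p m) * dotE (jacp B x p m p) p := h
  have hXZ : -s + dotE (gradp H x p m) p = X - Z := by
    rw [hX, hZdef, dotE, dotE, dotE, real_inner_smul_left, real_inner_smul_left,
      inner_add_left, inner_sub_left]
    ring
  constructor
  · rw [hquad]
    have h := alg1_aux C₀ Z (dm H x p m) (dotE (jacp B x p m p) p) X hC₀ hE3p
    nlinarith [h]
  · rw [hquad, hXZ]
    have h := alg2_aux C₀ Z (dm H x p m) (dotE (jacp B x p m p) p) X hC₀ hE3p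
    nlinarith [h]


end EMFG
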